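/- For any vector c ∈ ℝ^N with ∑_i ∑_j c_i c_j P(A_i ∩ A_j) > 0, one has P(⋃_{i=1}^N A_i) ≥ (∑_i c_i P(A_i))² / (∑_i ∑_j c_i c_j P(A_i ∩ A_j)). -/

import Mathlib

open MeasureTheory Finset

lemma measure_toReal_eq_sum {Ω : Type*} [Fintype Ω] [MeasurableSpace Ω]
    [DiscreteMeasurableSpace Ω] (P : Measure Ω) [IsFiniteMeasure P] (S : Set Ω) :
    (P S).toReal = ∑ ω : Ω, Set.indicator S (fun ω => (P {ω}).toReal) ω := by
  classical
  have hS : S = ⋃ ω ∈ S.toFinset, ({ω} : Set Ω) := by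
    ext x; simp
  rw [hS, measure_biUnion_finset ?_ (fun _ _ => MeasurableSet.singleton _)]
  · rw [ENNReal.toReal_sum (fun _ _ => measure_ne_top P _)]
    rw [Finset.sum_indicator_eq_sum_filter]
    congr 1
    ext ω; simp
  · intro x hx y hy hxy
    simp [Function.onFun, Set.disjoint_singleton, hxy]

theorem gallot_kounias_variational {Ω : Type*} [Fintype Ω] [MeasurableSpace Ω]
    [DiscreteMeasurableSpace Ω] (P : Measure Ω) [IsProbabilityMeasure P] (N : ℕ)
    (A : Fin N → Set Ω) (c : Fin N → ℝ)
    (hpos : 0 < ∑ i : Fin N, ∑ j : Fin N, c i * c j * (P (A i ∩ A j)).toReal) :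
    (P (⋃ i, A i)).toReal ≥
      (∑ i : Fin N, c i * (P (A i)).toReal) ^ 2 /
        (∑ i : Fin N, ∑ j : Fin N, c i * c j * (P (A i ∩ A j)).toReal) := by
  classical
  set p : Ω → ℝ := fun ω => (P {ω}).toReal with hp
  have hpnn : ∀ ω, 0 ≤ p ω := fun ω => ENNReal.toReal_nonneg
  set X : Ω → ℝ := fun ω => ∑ i : Fin N, c i * (if ω ∈ A i then 1 else 0) with hX
  set U : Set Ω := ⋃ i, A i with hU
  -- first moment
  have h1 : ∑ i : Fin N, c i * (P (A i)).toReal = ∑ ω : Ω, p ω * X ω := by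
    simp_rw [hX, Finset.mul_sum, Finset.sum_comm (s := Finset.univ (α := Ω))]
    refine Finset.sum_congr rfl fun i _ => ?_
    rw [measure_toReal_eq_sum, Finset.mul_sum]
    refine Finset.sum_congr rfl fun ω _ => ?_
    by_cases h : ω ∈ A i <;> simp [h, hp, Set.indicator_of_mem, Set.indicator_of_notMem, mul_comm]
  -- second moment
  have h2 : ∑ i : Fin N, ∑ j : Fin N, c i * c j * (P (A i ∩ A j)).toReal
      = ∑ ω : Ω, p ω * X ω ^ 2 := by
    have : ∀ ω, X ω ^ 2 = ∑ i : Fin N, ∑ j : Fin N,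
        c i * c j * ((if ω ∈ A i then 1 else 0) * (if ω ∈ A j then 1 else 0)) := by
      intro ω
      rw [sq, hX, Finset.sum_mul_sum]
      refine Finset.sum_congr rfl fun i _ => Finset.sum_congr rfl fun j _ => ?_
      ring
    simp_rw [this, Finset.mul_sum, Finset.sum_comm (s := Finset.univ (α := Ω))]
    refine Finset.sum_congr rfl fun i _ => Finset.sum_congr rfl fun j _ => ?_
    rw [measure_toReal_eq_sum, Finset.mul_sum]
    refine Finset.sum_congr rfl fun ω _ => ?_
    by_cases hi : ω ∈ A i <;> by_cases hj : ω ∈ A j <;>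
      simp [hi, hj, hp, Set.mem_inter_iff, Set.indicator_of_mem, Set.indicator_of_notMem, mul_comm]
  -- measure of the union
  have h3 : (P U).toReal = ∑ ω : Ω, p ω * (if ω ∈ U then 1 else 0) := by
    rw [measure_toReal_eq_sum]
    refine Finset.sum_congr rfl fun ω _ => ?_
    by_cases h : ω ∈ U <;> simp [h, hp, Set.indicator_of_mem, Set.indicator_of_notMem]
  -- X vanishes off U
  have hXU : ∀ ω, X ω = (if ω ∈ U then 1 else 0) * X ω := by
    intro ω
    by_cases h : ω ∈ U
    · simp [h]
    · have : X ω = 0 := by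
        rw [hX]
        refine Finset.sum_eq_zero fun i _ => ?_
        have : ω ∉ A i := fun hi => h (Set.mem_iUnion.2 ⟨i, hi⟩)
        simp [this]
      simp [h, this]
  -- Cauchy–Schwarz
  have hCS : (∑ ω : Ω, p ω * X ω) ^ 2 ≤
      (∑ ω : Ω, p ω * (if ω ∈ U then 1 else 0)) * (∑ ω : Ω, p ω * X ω ^ 2) := by
    have key := Finset.sum_mul_sq_le_sq_mul_sq Finset.univ
      (fun ω => Real.sqrt (p ω) * (if ω ∈ U then 1 else 0))
      (fun ω => Real.sqrt (p ω) * X ω)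
    calc (∑ ω : Ω, p ω * X ω) ^ 2
        = (∑ ω : Ω, (Real.sqrt (p ω) * (if ω ∈ U then 1 else 0)) *
            (Real.sqrt (p ω) * X ω)) ^ 2 := by
          congr 1
          refine Finset.sum_congr rfl fun ω _ => ?_
          rw [mul_mul_mul_comm, Real.mul_self_sqrt (hpnn ω), ← hXU ω]
      _ ≤ (∑ ω : Ω, (Real.sqrt (p ω) * (if ω ∈ U then 1 else 0)) ^ 2) *
            (∑ ω : Ω, (Real.sqrt (p ω) * X ω) ^ 2) := key
      _ = _ := by
          congr 1 <;> refine Finset.sum_congr rfl fun ω _ => ?_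
          · rw [mul_pow, Real.sq_sqrt (hpnn ω)]
            by_cases h : ω ∈ U <;> simp [h]
          · rw [mul_pow, Real.sq_sqrt (hpnn ω)]
  rw [ge_iff_le, div_le_iff₀ hpos]
  calc (∑ i : Fin N, c i * (P (A i)).toReal) ^ 2
      = (∑ ω : Ω, p ω * X ω) ^ 2 := by rw [h1]
    _ ≤ (∑ ω : Ω, p ω * (if ω ∈ U then 1 else 0)) * (∑ ω : Ω, p ω * X ω ^ 2) := hCS
    _ = (P U).toReal * ∑ i : Fin N, ∑ j : Fin N, c i * c j * (P (A i ∩ A j)).toReal := by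
        rw [h3, h2]
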